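/- Let G be a subcubic graph containing the configuration Γ: vertices a,1,2,b,e and c,3,4,d,f with edges a-1, 1-2, 2-b, b-e, c-3, 3-4, 4-d, a-c, 1-4, 2-3, e-d, and optionally a vertex f adjacent to both b and d; vertices 1,2,3,4 have no other neighbours. Let G' be obtained from G by deleting 1,2,3,4 and adding edges a-b and c-d. Then α(G') = α(G) - 2. -/

import Mathlib

/-- A set of vertices is independent if no two of its members are adjacent. -/
def IsIndepSet {V : Type*} (G : SimpleGraph V) (s : Set V) : Prop :=
  s.Pairwise fun a b => ¬ G.Adj a b

/-- The independence number: the largest cardinality of an independent set. -/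
noncomputable def indepNum {V : Type*} (G : SimpleGraph V) : ℕ :=
  sSup {n | ∃ s : Finset V, IsIndepSet G ↑s ∧ s.card = n}
/-- Adjacency of the configuration `Γ` on nine vertices, indexed
`0 = a, 1 = 1, 2 = 2, 3 = b, 4 = e, 5 = c, 6 = 3, 7 = 4, 8 = d`.
Edges: `a–1, 1–2, 2–b, b–e` on top, `c–3, 3–4, 4–d` on the bottom, the vertical
edge `a–c`, the crossing edges `1–4` and `2–3`, and `e–d`. -/
def gammaAdj (i j : Fin 9) : Prop :=
  ((i, j) ∈ ([(0,1),(1,2),(2,3),(3,4),(5,6),(6,7),(7,8),(0,5),(1,7),(2,6),(4,8)] :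
      List (Fin 9 × Fin 9))) ∨
  ((j, i) ∈ ([(0,1),(1,2),(2,3),(3,4),(5,6),(6,7),(7,8),(0,5),(1,7),(2,6),(4,8)] :
      List (Fin 9 × Fin 9)))

private lemma indep_bdd {V : Type*} [Fintype V] (G : SimpleGraph V) :
    BddAbove {n | ∃ s : Finset V, IsIndepSet G ↑s ∧ s.card = n} := by
  refine ⟨Fintype.card V, ?_⟩
  rintro n ⟨s, -, rfl⟩
  exact s.card_le_univ

private lemma card_le_indepNum {V : Type*} [Fintype V] {G : SimpleGraph V}
    {s : Finset V} (h : IsIndepSet G ↑s) : s.card ≤ indepNum G :=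
  le_csSup (indep_bdd G) ⟨s, h, rfl⟩

private lemma exists_indep_card {V : Type*} [Fintype V] (G : SimpleGraph V) :
    ∃ s : Finset V, IsIndepSet G ↑s ∧ s.card = indepNum G := by
  have h0 : (0:ℕ) ∈ {n | ∃ s : Finset V, IsIndepSet G ↑s ∧ s.card = n} :=
    ⟨∅, by simp [IsIndepSet], rfl⟩
  exact Nat.sSup_mem ⟨0, h0⟩ (indep_bdd G)

private lemma indep_insert {V : Type*} {G : SimpleGraph V} {s : Finset V} {a : V}
    [DecidableEq V]
    (hs : IsIndepSet G ↑s) (ha : ∀ b ∈ s, ¬ G.Adj a b) :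
    IsIndepSet G ↑(insert a s) := by
  rw [Finset.coe_insert]
  haveI : Std.Symm (fun a b : V => ¬ G.Adj a b) := ⟨fun x y h h2 => h h2.symm⟩
  exact (Set.pairwise_insert_of_symmetric (r := fun a b : V => ¬ G.Adj a b)).2
    ⟨hs, fun b hb _ => ha b (Finset.mem_coe.1 hb)⟩

/-- Γ-reduction: deleting the four inner vertices `1,2,3,4` (indices `1,2,6,7`) of an
induced `Γ` and adding the edges `a–b` and `c–d` decreases the independence number
by exactly 2.  Any neighbour of `b` outside the configuration is the optional
vertex `f`, a common neighbour of `b` and `d`. -/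
theorem gamma_reduction {V : Type*} [Fintype V] (G : SimpleGraph V)
    [DecidableRel G.Adj] (hdeg : ∀ v, G.degree v ≤ 3)
    (w : Fin 9 → V) (hw : Function.Injective w)
    (hind : ∀ i j, G.Adj (w i) (w j) ↔ gammaAdj i j)
    (hinner : ∀ i : Fin 9, i ∈ ({1, 2, 6, 7} : Set (Fin 9)) →
      ∀ v, G.Adj (w i) v → ∃ j, v = w j)
    (hfbd : ∀ v, (∀ i, v ≠ w i) → (G.Adj (w 3) v ↔ G.Adj (w 8) v)) :
    indepNum (SimpleGraph.fromRel
      (fun a b : {v : V // v ≠ w 1 ∧ v ≠ w 2 ∧ v ≠ w 6 ∧ v ≠ w 7} =>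
        G.Adj a.1 b.1 ∨ (a.1 = w 0 ∧ b.1 = w 3) ∨ (a.1 = w 5 ∧ b.1 = w 8)))
    = indepNum G - 2 := by
  classical
  set G' := SimpleGraph.fromRel
      (fun a b : {v : V // v ≠ w 1 ∧ v ≠ w 2 ∧ v ≠ w 6 ∧ v ≠ w 7} =>
        G.Adj a.1 b.1 ∨ (a.1 = w 0 ∧ b.1 = w 3) ∨ (a.1 = w 5 ∧ b.1 = w 8)) with hG'
  haveI : Fintype {v : V // v ≠ w 1 ∧ v ≠ w 2 ∧ v ≠ w 6 ∧ v ≠ w 7} :=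
    Fintype.ofFinite _
  have hwne : ∀ {i j : Fin 9}, i ≠ j → w i ≠ w j := fun h e => h (hw e)
  have hyadj : ∀ {i j : Fin 9}, gammaAdj i j → G.Adj (w i) (w j) :=
    fun h => (hind _ _).2 h
  have hG'adj : ∀ a b : {v : V // v ≠ w 1 ∧ v ≠ w 2 ∧ v ≠ w 6 ∧ v ≠ w 7},
      G'.Adj a b ↔ a ≠ b ∧
      ((G.Adj a.1 b.1 ∨ (a.1 = w 0 ∧ b.1 = w 3) ∨ (a.1 = w 5 ∧ b.1 = w 8)) ∨
       (G.Adj b.1 a.1 ∨ (b.1 = w 0 ∧ a.1 = w 3) ∨ (b.1 = w 5 ∧ a.1 = w 8))) := by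
    intro a b; rw [hG']; exact SimpleGraph.fromRel_adj _ _ _
  -- neighbour classification
  have hnbr : ∀ i : Fin 9, i ∈ ({1, 2, 6, 7} : Set (Fin 9)) → ∀ x, G.Adj (w i) x →
      ∃ j, x = w j ∧ gammaAdj i j := by
    intro i hi x hx
    obtain ⟨j, rfl⟩ := hinner i hi x hx
    exact ⟨j, rfl, (hind i j).1 hx⟩
  have hnb1 : ∀ x, G.Adj (w 1) x → x = w 0 ∨ x = w 2 ∨ x = w 7 := by
    intro x hx
    obtain ⟨j, rfl, hg⟩ := hnbr 1 (by simp) x hx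
    have hj : ∀ j : Fin 9, gammaAdj 1 j → j = 0 ∨ j = 2 ∨ j = 7 := by
      unfold gammaAdj; decide
    rcases hj j hg with rfl | rfl | rfl <;> simp
  have hnb2 : ∀ x, G.Adj (w 2) x → x = w 1 ∨ x = w 3 ∨ x = w 6 := by
    intro x hx
    obtain ⟨j, rfl, hg⟩ := hnbr 2 (by simp) x hx
    have hj : ∀ j : Fin 9, gammaAdj 2 j → j = 1 ∨ j = 3 ∨ j = 6 := by
      unfold gammaAdj; decide
    rcases hj j hg with rfl | rfl | rfl <;> simp
  have hnb6 : ∀ x, G.Adj (w 6) x → x = w 5 ∨ x = w 2 ∨ x = w 7 := by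
    intro x hx
    obtain ⟨j, rfl, hg⟩ := hnbr 6 (by simp) x hx
    have hj : ∀ j : Fin 9, gammaAdj 6 j → j = 5 ∨ j = 2 ∨ j = 7 := by
      unfold gammaAdj; decide
    rcases hj j hg with rfl | rfl | rfl <;> simp
  have hnb7 : ∀ x, G.Adj (w 7) x → x = w 6 ∨ x = w 8 ∨ x = w 1 := by
    intro x hx
    obtain ⟨j, rfl, hg⟩ := hnbr 7 (by simp) x hx
    have hj : ∀ j : Fin 9, gammaAdj 7 j → j = 6 ∨ j = 8 ∨ j = 1 := by
      unfold gammaAdj; decide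
    rcases hj j hg with rfl | rfl | rfl <;> simp
  have hnb3 : ∀ x, G.Adj (w 3) x → x = w 2 ∨ x = w 4 ∨ G.Adj (w 8) x := by
    intro x hx
    by_cases hxw : ∀ i, x ≠ w i
    · exact Or.inr (Or.inr ((hfbd x hxw).1 hx))
    · push_neg at hxw
      obtain ⟨i, rfl⟩ := hxw
      have hg : gammaAdj 3 i := (hind 3 i).1 hx
      have hj : ∀ j : Fin 9, gammaAdj 3 j → j = 2 ∨ j = 4 := by
        unfold gammaAdj; decide
      rcases hj i hg with rfl | rfl <;> simp
  have hnb8 : ∀ x, G.Adj (w 8) x → x = w 7 ∨ x = w 4 ∨ G.Adj (w 3) x := by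
    intro x hx
    by_cases hxw : ∀ i, x ≠ w i
    · exact Or.inr (Or.inr ((hfbd x hxw).2 hx))
    · push_neg at hxw
      obtain ⟨i, rfl⟩ := hxw
      have hg : gammaAdj 8 i := (hind 8 i).1 hx
      have hj : ∀ j : Fin 9, gammaAdj 8 j → j = 7 ∨ j = 4 := by
        unfold gammaAdj; decide
      rcases hj i hg with rfl | rfl <;> simp
  ------------------------------------------------------------------
  -- Direction 1 : indepNum G' + 2 ≤ indepNum G
  ------------------------------------------------------------------
  obtain ⟨S', hS'i, hS'c⟩ := exists_indep_card G'
  set S : Finset V := S'.image Subtype.val with hS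
  have hScard : S.card = indepNum G' := by
    rw [hS, Finset.card_image_of_injective _ Subtype.val_injective, hS'c]
  have hmemS : ∀ x ∈ S, x ≠ w 1 ∧ x ≠ w 2 ∧ x ≠ w 6 ∧ x ≠ w 7 := by
    intro x hx
    rw [hS] at hx
    simp only [Finset.mem_image] at hx
    obtain ⟨y, _, rfl⟩ := hx
    exact y.2
  have h1S : w 1 ∉ S := fun h => (hmemS _ h).1 rfl
  have h2S : w 2 ∉ S := fun h => (hmemS _ h).2.1 rfl
  have h6S : w 6 ∉ S := fun h => (hmemS _ h).2.2.1 rfl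
  have h7S : w 7 ∉ S := fun h => (hmemS _ h).2.2.2 rfl
  have hSind : ∀ x ∈ S, ∀ y ∈ S, x ≠ y → ¬ G.Adj x y := by
    intro x hx y hy hxy hadj
    rw [hS] at hx hy
    simp only [Finset.mem_image] at hx hy
    obtain ⟨x', hx', rfl⟩ := hx
    obtain ⟨y', hy', rfl⟩ := hy
    have hne' : x' ≠ y' := fun h => hxy (by rw [h])
    exact hS'i (Finset.mem_coe.2 hx') (Finset.mem_coe.2 hy') hne'
      ((hG'adj x' y').2 ⟨hne', Or.inl (Or.inl hadj)⟩)
  have hSindep : IsIndepSet G ↑S := fun x hx y hy hxy =>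
    hSind x (Finset.mem_coe.1 hx) y (Finset.mem_coe.1 hy) hxy
  have hnot03 : ¬ (w 0 ∈ S ∧ w 3 ∈ S) := by
    rintro ⟨h0, h3⟩
    rw [hS] at h0 h3
    simp only [Finset.mem_image] at h0 h3
    obtain ⟨a', ha', ha0⟩ := h0
    obtain ⟨b', hb', hb3⟩ := h3
    have hne' : a' ≠ b' := by
      intro h
      exact hwne (show (0:Fin 9) ≠ 3 by decide) (by rw [← ha0, ← hb3, h])
    exact hS'i (Finset.mem_coe.2 ha') (Finset.mem_coe.2 hb') hne'
      ((hG'adj a' b').2 ⟨hne', Or.inl (Or.inr (Or.inl ⟨ha0, hb3⟩))⟩)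
  have hnot58 : ¬ (w 5 ∈ S ∧ w 8 ∈ S) := by
    rintro ⟨h5, h8⟩
    rw [hS] at h5 h8
    simp only [Finset.mem_image] at h5 h8
    obtain ⟨a', ha', ha5⟩ := h5
    obtain ⟨b', hb', hb8⟩ := h8
    have hne' : a' ≠ b' := by
      intro h
      exact hwne (show (5:Fin 9) ≠ 8 by decide) (by rw [← ha5, ← hb8, h])
    exact hS'i (Finset.mem_coe.2 ha') (Finset.mem_coe.2 hb') hne'
      ((hG'adj a' b').2 ⟨hne', Or.inl (Or.inr (Or.inr ⟨ha5, hb8⟩))⟩)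
  have key1 : ∃ T : Finset V, IsIndepSet G ↑T ∧ S.card + 2 ≤ T.card := by
    have case16 : w 0 ∉ S → w 5 ∉ S →
        ∃ T : Finset V, IsIndepSet G ↑T ∧ S.card + 2 ≤ T.card := by
      intro h0 h5
      refine ⟨insert (w 1) (insert (w 6) S), ?_, ?_⟩
      · have hi6 : IsIndepSet G ↑(insert (w 6) S) := by
          apply indep_insert hSindep
          intro b hb hadj
          rcases hnb6 b hadj with rfl | rfl | rfl
          · exact h5 hb
          · exact h2S hb
          · exact h7S hb
        apply indep_insert hi6
        intro b hb hadj
        rcases hnb1 b hadj with rfl | rfl | rfl <;>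
          rcases Finset.mem_insert.1 hb with h | h
        · exact hwne (show (0:Fin 9) ≠ 6 by decide) h
        · exact h0 h
        · exact hwne (show (2:Fin 9) ≠ 6 by decide) h
        · exact h2S h
        · exact hwne (show (7:Fin 9) ≠ 6 by decide) h
        · exact h7S h
      · have c6 : w 6 ∉ S := h6S
        have c1 : w 1 ∉ insert (w 6) S := by
          simp only [Finset.mem_insert]
          push_neg
          exact ⟨hwne (show (1:Fin 9) ≠ 6 by decide), h1S⟩
        rw [Finset.card_insert_of_notMem c1, Finset.card_insert_of_notMem c6]
    by_cases h3 : w 3 ∈ S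
    · have h0 : w 0 ∉ S := fun h => hnot03 ⟨h, h3⟩
      by_cases h5 : w 5 ∈ S
      · -- case b,c ∈ S : swap c out, add 1, 3(inner), d
        have h8 : w 8 ∉ S := fun h => hnot58 ⟨h5, h⟩
        have h4 : w 4 ∉ S := fun h =>
          hSind (w 3) h3 (w 4) h (hwne (show (3:Fin 9) ≠ 4 by decide))
            (hyadj (show gammaAdj 3 4 by unfold gammaAdj; decide))
        have hEind : IsIndepSet G ↑(S.erase (w 5)) := fun x hx y hy hxy =>
          hSind x (Finset.mem_of_mem_erase (Finset.mem_coe.1 hx)) y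
            (Finset.mem_of_mem_erase (Finset.mem_coe.1 hy)) hxy
        refine ⟨insert (w 1) (insert (w 6) (insert (w 8) (S.erase (w 5)))), ?_, ?_⟩
        · have hi8 : IsIndepSet G ↑(insert (w 8) (S.erase (w 5))) := by
            apply indep_insert hEind
            intro b hb hadj
            have hbS := Finset.mem_of_mem_erase hb
            rcases hnb8 b hadj with rfl | rfl | h
            · exact h7S hbS
            · exact h4 hbS
            · exact hSind (w 3) h3 b hbS h.ne h
          have hi6 : IsIndepSet G ↑(insert (w 6) (insert (w 8) (S.erase (w 5)))) := by
            apply indep_insert hi8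
            intro b hb hadj
            rcases hnb6 b hadj with rfl | rfl | rfl <;>
              rcases Finset.mem_insert.1 hb with h | h
            · exact hwne (show (5:Fin 9) ≠ 8 by decide) h
            · exact (Finset.mem_erase.1 h).1 rfl
            · exact hwne (show (2:Fin 9) ≠ 8 by decide) h
            · exact h2S (Finset.mem_of_mem_erase h)
            · exact hwne (show (7:Fin 9) ≠ 8 by decide) h
            · exact h7S (Finset.mem_of_mem_erase h)
          apply indep_insert hi6
          intro b hb hadj
          rcases hnb1 b hadj with rfl | rfl | rfl <;>
            simp only [Finset.mem_insert, Finset.mem_erase] at hb <;>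
            rcases hb with h | h | ⟨-, h⟩
          · exact hwne (show (0:Fin 9) ≠ 6 by decide) h
          · exact hwne (show (0:Fin 9) ≠ 8 by decide) h
          · exact h0 h
          · exact hwne (show (2:Fin 9) ≠ 6 by decide) h
          · exact hwne (show (2:Fin 9) ≠ 8 by decide) h
          · exact h2S h
          · exact hwne (show (7:Fin 9) ≠ 6 by decide) h
          · exact hwne (show (7:Fin 9) ≠ 8 by decide) h
          · exact h7S h
        · have hc5 := Finset.card_erase_of_mem h5
          have hS1 : 1 ≤ S.card := Finset.card_pos.2 ⟨_, h5⟩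
          have c8 : w 8 ∉ S.erase (w 5) := fun h => h8 (Finset.mem_of_mem_erase h)
          have c6 : w 6 ∉ insert (w 8) (S.erase (w 5)) := by
            simp only [Finset.mem_insert, Finset.mem_erase]
            push_neg
            exact ⟨hwne (show (6:Fin 9) ≠ 8 by decide), fun _ => h6S⟩
          have c1 : w 1 ∉ insert (w 6) (insert (w 8) (S.erase (w 5))) := by
            simp only [Finset.mem_insert, Finset.mem_erase]
            push_neg
            exact ⟨hwne (show (1:Fin 9) ≠ 6 by decide),
              hwne (show (1:Fin 9) ≠ 8 by decide), fun _ => h1S⟩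
          rw [Finset.card_insert_of_notMem c1, Finset.card_insert_of_notMem c6,
            Finset.card_insert_of_notMem c8, hc5]
          omega
      · exact case16 h0 h5
    · by_cases h8 : w 8 ∈ S
      · have h5 : w 5 ∉ S := fun h => hnot58 ⟨h, h8⟩
        by_cases h0 : w 0 ∈ S
        · -- case a,d ∈ S : swap a out, add 1, 3(inner), b
          have h4 : w 4 ∉ S := fun h =>
            hSind (w 8) h8 (w 4) h (hwne (show (8:Fin 9) ≠ 4 by decide))
              (hyadj (show gammaAdj 8 4 by unfold gammaAdj; decide))
          have hEind : IsIndepSet G ↑(S.erase (w 0)) := fun x hx y hy hxy =>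
            hSind x (Finset.mem_of_mem_erase (Finset.mem_coe.1 hx)) y
              (Finset.mem_of_mem_erase (Finset.mem_coe.1 hy)) hxy
          refine ⟨insert (w 1) (insert (w 6) (insert (w 3) (S.erase (w 0)))), ?_, ?_⟩
          · have hi3 : IsIndepSet G ↑(insert (w 3) (S.erase (w 0))) := by
              apply indep_insert hEind
              intro b hb hadj
              have hbS := Finset.mem_of_mem_erase hb
              rcases hnb3 b hadj with rfl | rfl | h
              · exact h2S hbS
              · exact h4 hbS
              · exact hSind (w 8) h8 b hbS h.ne h
            have hi6 : IsIndepSet G ↑(insert (w 6) (insert (w 3) (S.erase (w 0)))) := by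
              apply indep_insert hi3
              intro b hb hadj
              rcases hnb6 b hadj with rfl | rfl | rfl <;>
                rcases Finset.mem_insert.1 hb with h | h
              · exact hwne (show (5:Fin 9) ≠ 3 by decide) h
              · exact h5 (Finset.mem_of_mem_erase h)
              · exact hwne (show (2:Fin 9) ≠ 3 by decide) h
              · exact h2S (Finset.mem_of_mem_erase h)
              · exact hwne (show (7:Fin 9) ≠ 3 by decide) h
              · exact h7S (Finset.mem_of_mem_erase h)
            apply indep_insert hi6
            intro b hb hadj
            rcases hnb1 b hadj with rfl | rfl | rfl <;>
              simp only [Finset.mem_insert, Finset.mem_erase] at hb <;>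
              rcases hb with h | h | ⟨hne0, h⟩
            · exact hwne (show (0:Fin 9) ≠ 6 by decide) h
            · exact hwne (show (0:Fin 9) ≠ 3 by decide) h
            · exact hne0 rfl
            · exact hwne (show (2:Fin 9) ≠ 6 by decide) h
            · exact hwne (show (2:Fin 9) ≠ 3 by decide) h
            · exact h2S h
            · exact hwne (show (7:Fin 9) ≠ 6 by decide) h
            · exact hwne (show (7:Fin 9) ≠ 3 by decide) h
            · exact h7S h
          · have hc0 := Finset.card_erase_of_mem h0
            have hS1 : 1 ≤ S.card := Finset.card_pos.2 ⟨_, h0⟩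
            have c3 : w 3 ∉ S.erase (w 0) := fun h => h3 (Finset.mem_of_mem_erase h)
            have c6 : w 6 ∉ insert (w 3) (S.erase (w 0)) := by
              simp only [Finset.mem_insert, Finset.mem_erase]
              push_neg
              exact ⟨hwne (show (6:Fin 9) ≠ 3 by decide), fun _ => h6S⟩
            have c1 : w 1 ∉ insert (w 6) (insert (w 3) (S.erase (w 0))) := by
              simp only [Finset.mem_insert, Finset.mem_erase]
              push_neg
              exact ⟨hwne (show (1:Fin 9) ≠ 6 by decide),
                hwne (show (1:Fin 9) ≠ 3 by decide), fun _ => h1S⟩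
            rw [Finset.card_insert_of_notMem c1, Finset.card_insert_of_notMem c6,
              Finset.card_insert_of_notMem c3, hc0]
            omega
        · exact case16 h0 h5
      · -- case b,d ∉ S : add 2, 4 (inner)
        refine ⟨insert (w 2) (insert (w 7) S), ?_, ?_⟩
        · have hi7 : IsIndepSet G ↑(insert (w 7) S) := by
            apply indep_insert hSindep
            intro b hb hadj
            rcases hnb7 b hadj with rfl | rfl | rfl
            · exact h6S hb
            · exact h8 hb
            · exact h1S hb
          apply indep_insert hi7
          intro b hb hadj
          rcases hnb2 b hadj with rfl | rfl | rfl <;>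
            rcases Finset.mem_insert.1 hb with h | h
          · exact hwne (show (1:Fin 9) ≠ 7 by decide) h
          · exact h1S h
          · exact hwne (show (3:Fin 9) ≠ 7 by decide) h
          · exact h3 h
          · exact hwne (show (6:Fin 9) ≠ 7 by decide) h
          · exact h6S h
        · have c7 : w 7 ∉ S := h7S
          have c2 : w 2 ∉ insert (w 7) S := by
            simp only [Finset.mem_insert]
            push_neg
            exact ⟨hwne (show (2:Fin 9) ≠ 7 by decide), h2S⟩
          rw [Finset.card_insert_of_notMem c2, Finset.card_insert_of_notMem c7]
  have hle1 : indepNum G' + 2 ≤ indepNum G := by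
    obtain ⟨T, hTi, hTc⟩ := key1
    have := card_le_indepNum hTi
    omega
  ------------------------------------------------------------------
  -- Direction 2 : indepNum G ≤ indepNum G' + 2
  ------------------------------------------------------------------
  obtain ⟨M, hMi, hMc⟩ := exists_indep_card G
  have hMind : ∀ x ∈ M, ∀ y ∈ M, x ≠ y → ¬ G.Adj x y := fun x hx y hy h =>
    hMi (Finset.mem_coe.2 hx) (Finset.mem_coe.2 hy) h
  have mk : ∀ S₁ : Finset V, (∀ x ∈ S₁, x ∈ M) →
      (∀ x ∈ S₁, x ≠ w 1 ∧ x ≠ w 2 ∧ x ≠ w 6 ∧ x ≠ w 7) →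
      ¬(w 0 ∈ S₁ ∧ w 3 ∈ S₁) → ¬(w 5 ∈ S₁ ∧ w 8 ∈ S₁) →
      S₁.card ≤ indepNum G' := by
    intro S₁ hsub hq hn03 hn58
    have hcard : (S₁.subtype
        (fun v => v ≠ w 1 ∧ v ≠ w 2 ∧ v ≠ w 6 ∧ v ≠ w 7)).card = S₁.card := by
      rw [Finset.card_subtype, Finset.filter_true_of_mem hq]
    rw [← hcard]
    apply card_le_indepNum
    intro a ha b hb hab hadj
    rw [Finset.mem_coe, Finset.mem_subtype] at ha hb
    have h1 : a.1 ≠ b.1 := fun h => hab (Subtype.ext h)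
    rcases (hG'adj a b).1 hadj with ⟨-, h | h⟩ <;>
      rcases h with h | ⟨e1, e2⟩ | ⟨e1, e2⟩
    · exact hMind _ (hsub _ ha) _ (hsub _ hb) h1 h
    · exact hn03 ⟨e1 ▸ ha, e2 ▸ hb⟩
    · exact hn58 ⟨e1 ▸ ha, e2 ▸ hb⟩
    · exact hMind _ (hsub _ hb) _ (hsub _ ha) (Ne.symm h1) h
    · exact hn03 ⟨e1 ▸ hb, e2 ▸ ha⟩
    · exact hn58 ⟨e1 ▸ hb, e2 ▸ ha⟩
  have hle2 : indepNum G ≤ indepNum G' + 2 := by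
    by_cases h03 : w 0 ∈ M ∧ w 3 ∈ M
    · obtain ⟨h0M, h3M⟩ := h03
      have h1M : w 1 ∉ M := fun h =>
        hMind _ h0M _ h (hwne (show (0:Fin 9) ≠ 1 by decide))
          (hyadj (show gammaAdj 0 1 by unfold gammaAdj; decide))
      have h2M : w 2 ∉ M := fun h =>
        hMind _ h3M _ h (hwne (show (3:Fin 9) ≠ 2 by decide))
          (hyadj (show gammaAdj 3 2 by unfold gammaAdj; decide))
      have h5M : w 5 ∉ M := fun h =>
        hMind _ h0M _ h (hwne (show (0:Fin 9) ≠ 5 by decide))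
          (hyadj (show gammaAdj 0 5 by unfold gammaAdj; decide))
      have h67 : ¬(w 6 ∈ M ∧ w 7 ∈ M) := fun h =>
        hMind _ h.1 _ h.2 (hwne (show (6:Fin 9) ≠ 7 by decide))
          (hyadj (show gammaAdj 6 7 by unfold gammaAdj; decide)) 
      set S₁ := ((M.erase (w 0)).erase (w 6)).erase (w 7) with hS₁
      have hsub : ∀ x ∈ S₁, x ∈ M := fun x hx =>
        Finset.mem_of_mem_erase (Finset.mem_of_mem_erase (Finset.mem_of_mem_erase hx))
      have hq : ∀ x ∈ S₁, x ≠ w 1 ∧ x ≠ w 2 ∧ x ≠ w 6 ∧ x ≠ w 7 := by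
        intro x hx
        refine ⟨fun h => h1M (h ▸ hsub x hx), fun h => h2M (h ▸ hsub x hx), ?_, ?_⟩
        · exact (Finset.mem_erase.1 (Finset.mem_of_mem_erase hx)).1
        · exact (Finset.mem_erase.1 hx).1
      have hn03 : ¬(w 0 ∈ S₁ ∧ w 3 ∈ S₁) := by
        rintro ⟨h, -⟩
        exact Finset.notMem_erase _ _
          (Finset.mem_of_mem_erase (Finset.mem_of_mem_erase h))
      have hn58 : ¬(w 5 ∈ S₁ ∧ w 8 ∈ S₁) := fun h => h5M (hsub _ h.1)
      have hcard : M.card ≤ S₁.card + 2 := by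
        have hc0 := Finset.card_erase_of_mem h0M
        by_cases h6 : w 6 ∈ M
        · have h7 : w 7 ∉ M := fun h => h67 ⟨h6, h⟩
          have e7 : ((M.erase (w 0)).erase (w 6)).erase (w 7)
              = (M.erase (w 0)).erase (w 6) :=
            Finset.erase_eq_of_notMem
              (fun h => h7 (Finset.mem_of_mem_erase (Finset.mem_of_mem_erase h)))
          rw [hS₁, e7, Finset.card_erase_of_mem
            (Finset.mem_erase.2 ⟨hwne (show (6:Fin 9) ≠ 0 by decide), h6⟩), hc0]
          omega
        · have e6 : (M.erase (w 0)).erase (w 6) = M.erase (w 0) :=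
            Finset.erase_eq_of_notMem (fun h => h6 (Finset.mem_of_mem_erase h))
          rw [hS₁, e6]
          have h7' := Finset.pred_card_le_card_erase (s := M.erase (w 0)) (a := w 7)
          omega
      have := mk S₁ hsub hq hn03 hn58
      omega
    · by_cases h58 : w 5 ∈ M ∧ w 8 ∈ M
      · obtain ⟨h5M, h8M⟩ := h58
        have h6M : w 6 ∉ M := fun h =>
          hMind _ h5M _ h (hwne (show (5:Fin 9) ≠ 6 by decide))
            (hyadj (show gammaAdj 5 6 by unfold gammaAdj; decide))
        have h7M : w 7 ∉ M := fun h =>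
          hMind _ h8M _ h (hwne (show (8:Fin 9) ≠ 7 by decide))
            (hyadj (show gammaAdj 8 7 by unfold gammaAdj; decide))
        have h0M : w 0 ∉ M := fun h =>
          hMind _ h5M _ h (hwne (show (5:Fin 9) ≠ 0 by decide))
            (hyadj (show gammaAdj 5 0 by unfold gammaAdj; decide))
        have h12 : ¬(w 1 ∈ M ∧ w 2 ∈ M) := fun h =>
          hMind _ h.1 _ h.2 (hwne (show (1:Fin 9) ≠ 2 by decide))
            (hyadj (show gammaAdj 1 2 by unfold gammaAdj; decide))
        set S₁ := ((M.erase (w 5)).erase (w 1)).erase (w 2) with hS₁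
        have hsub : ∀ x ∈ S₁, x ∈ M := fun x hx =>
          Finset.mem_of_mem_erase (Finset.mem_of_mem_erase (Finset.mem_of_mem_erase hx))
        have hq : ∀ x ∈ S₁, x ≠ w 1 ∧ x ≠ w 2 ∧ x ≠ w 6 ∧ x ≠ w 7 := by
          intro x hx
          refine ⟨?_, ?_, fun h => h6M (h ▸ hsub x hx), fun h => h7M (h ▸ hsub x hx)⟩
          · exact (Finset.mem_erase.1 (Finset.mem_of_mem_erase hx)).1
          · exact (Finset.mem_erase.1 hx).1
        have hn03 : ¬(w 0 ∈ S₁ ∧ w 3 ∈ S₁) := fun h => h0M (hsub _ h.1)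
        have hn58 : ¬(w 5 ∈ S₁ ∧ w 8 ∈ S₁) := by
          rintro ⟨h, -⟩
          exact Finset.notMem_erase _ _
            (Finset.mem_of_mem_erase (Finset.mem_of_mem_erase h))
        have hcard : M.card ≤ S₁.card + 2 := by
          have hc5 := Finset.card_erase_of_mem h5M
          by_cases h1 : w 1 ∈ M
          · have h2 : w 2 ∉ M := fun h => h12 ⟨h1, h⟩
            have e2 : ((M.erase (w 5)).erase (w 1)).erase (w 2)
                = (M.erase (w 5)).erase (w 1) :=
              Finset.erase_eq_of_notMem
                (fun h => h2 (Finset.mem_of_mem_erase (Finset.mem_of_mem_erase h)))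
            rw [hS₁, e2, Finset.card_erase_of_mem
              (Finset.mem_erase.2 ⟨hwne (show (1:Fin 9) ≠ 5 by decide), h1⟩), hc5]
            omega
          · have e1 : (M.erase (w 5)).erase (w 1) = M.erase (w 5) :=
              Finset.erase_eq_of_notMem (fun h => h1 (Finset.mem_of_mem_erase h))
            rw [hS₁, e1]
            have h2' := Finset.pred_card_le_card_erase (s := M.erase (w 5)) (a := w 2)
            omega
        have := mk S₁ hsub hq hn03 hn58
        omega
      · -- no conflicting pair in M : just delete the (at most two) inner vertices
        have h17 : ¬(w 1 ∈ M ∧ w 7 ∈ M) := fun h =>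
          hMind _ h.1 _ h.2 (hwne (show (1:Fin 9) ≠ 7 by decide))
            (hyadj (show gammaAdj 1 7 by unfold gammaAdj; decide))
        have h12 : ¬(w 1 ∈ M ∧ w 2 ∈ M) := fun h =>
          hMind _ h.1 _ h.2 (hwne (show (1:Fin 9) ≠ 2 by decide))
            (hyadj (show gammaAdj 1 2 by unfold gammaAdj; decide))
        have h26 : ¬(w 2 ∈ M ∧ w 6 ∈ M) := fun h =>
          hMind _ h.1 _ h.2 (hwne (show (2:Fin 9) ≠ 6 by decide))
            (hyadj (show gammaAdj 2 6 by unfold gammaAdj; decide))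
        set S₁ := (((M.erase (w 1)).erase (w 2)).erase (w 6)).erase (w 7) with hS₁
        have hsub : ∀ x ∈ S₁, x ∈ M := fun x hx =>
          Finset.mem_of_mem_erase (Finset.mem_of_mem_erase
            (Finset.mem_of_mem_erase (Finset.mem_of_mem_erase hx)))
        have hq : ∀ x ∈ S₁, x ≠ w 1 ∧ x ≠ w 2 ∧ x ≠ w 6 ∧ x ≠ w 7 := by
          intro x hx
          refine ⟨?_, ?_, ?_, ?_⟩
          · exact (Finset.mem_erase.1 (Finset.mem_of_mem_erase
              (Finset.mem_of_mem_erase (Finset.mem_of_mem_erase hx)))).1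
          · exact (Finset.mem_erase.1
              (Finset.mem_of_mem_erase (Finset.mem_of_mem_erase hx))).1
          · exact (Finset.mem_erase.1 (Finset.mem_of_mem_erase hx)).1
          · exact (Finset.mem_erase.1 hx).1
        have hn03 : ¬(w 0 ∈ S₁ ∧ w 3 ∈ S₁) := fun h =>
          h03 ⟨hsub _ h.1, hsub _ h.2⟩
        have hn58 : ¬(w 5 ∈ S₁ ∧ w 8 ∈ S₁) := fun h =>
          h58 ⟨hsub _ h.1, hsub _ h.2⟩
        have hcard : M.card ≤ S₁.card + 2 := by
          by_cases h1 : w 1 ∈ M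
          · have h2 : w 2 ∉ M := fun h => h12 ⟨h1, h⟩
            have h7 : w 7 ∉ M := fun h => h17 ⟨h1, h⟩
            have e2 : (M.erase (w 1)).erase (w 2) = M.erase (w 1) :=
              Finset.erase_eq_of_notMem (fun h => h2 (Finset.mem_of_mem_erase h))
            have e7 : (((M.erase (w 1)).erase (w 2)).erase (w 6)).erase (w 7)
                = ((M.erase (w 1)).erase (w 2)).erase (w 6) :=
              Finset.erase_eq_of_notMem (fun h => h7 (Finset.mem_of_mem_erase
                (Finset.mem_of_mem_erase (Finset.mem_of_mem_erase h))))
            rw [hS₁, e7, e2]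
            have hc1 := Finset.card_erase_of_mem h1
            have h6' := Finset.pred_card_le_card_erase (s := M.erase (w 1)) (a := w 6)
            omega
          · have e1 : M.erase (w 1) = M := Finset.erase_eq_of_notMem h1
            by_cases h2 : w 2 ∈ M
            · have h6 : w 6 ∉ M := fun h => h26 ⟨h2, h⟩
              have e6 : ((M.erase (w 1)).erase (w 2)).erase (w 6)
                  = (M.erase (w 1)).erase (w 2) :=
                Finset.erase_eq_of_notMem (fun h => h6 (Finset.mem_of_mem_erase
                  (Finset.mem_of_mem_erase h)))
              rw [hS₁, e6, e1]
              have hc2 := Finset.card_erase_of_mem h2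
              have h7' := Finset.pred_card_le_card_erase (s := M.erase (w 2)) (a := w 7)
              omega
            · have e2 : (M.erase (w 1)).erase (w 2) = M.erase (w 1) :=
                Finset.erase_eq_of_notMem (fun h => h2 (Finset.mem_of_mem_erase h))
              rw [hS₁, e2, e1]
              have h6' := Finset.pred_card_le_card_erase (s := M) (a := w 6)
              have h7' := Finset.pred_card_le_card_erase (s := M.erase (w 6)) (a := w 7)
              omega
        have := mk S₁ hsub hq hn03 hn58
        omega
  omega
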